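/- Let p be a prime and N ≥ 1. Let C ⊆ (ZMod p)^N be an F_p-linear code (a ZMod p-submodule of functions Fin N → ZMod p) that contains the all-one vector 𝟙 and such that any two distinct codewords have Hamming distance at least d. Let S ⊆ C be a finite set of codewords with |S| ≥ 2 such that for all distinct c, c' ∈ S, the difference c − c' is not a scalar multiple of 𝟙 (i.e., no two elements of S lie in the same coset of the span of 𝟙). For each c ∈ S define v_c ∈ ℂ^N by v_c(α) = (1/√N)·e_p(c(α)). Then every v_c is a unit vector, and for all distinct c, c' ∈ S one has |⟨v_c, v_{c'}⟩| ≤ (p·(p−1)·N − p²·d)/(2N); in particular, the coherence of the family (v_c)_{c∈S} is at most (p·(p−1)·N − p²·d)/(2N). -/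

import Mathlib

open scoped ComplexInnerProductSpace

/-- The canonical additive character of `ZMod p`: `ep p x = exp(2πi·x̂/p)`. -/
noncomputable def ep (p : ℕ) (x : ZMod p) : ℂ :=
  Complex.exp (2 * Real.pi * Complex.I * (x.val : ℂ) / (p : ℂ))

lemma ep_eq_pow (p : ℕ) (x : ZMod p) :
    ep p x = Complex.exp (2 * Real.pi * Complex.I / p) ^ x.val := by
  rw [ep, ← Complex.exp_nat_mul]
  ring_nf

lemma zeta_pow (p : ℕ) [NeZero p] :
    Complex.exp (2 * Real.pi * Complex.I / p) ^ p = 1 := by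
  have hp : (p : ℂ) ≠ 0 := Nat.cast_ne_zero.2 (NeZero.ne p)
  rw [← Complex.exp_nat_mul,
    show ((p : ℂ) * (2 * Real.pi * Complex.I / p)) = 2 * Real.pi * Complex.I by field_simp,
    Complex.exp_two_pi_mul_I]

lemma zeta_pow_congr (p : ℕ) [NeZero p] {a b : ℕ} (h : a % p = b % p) :
    Complex.exp (2 * Real.pi * Complex.I / p) ^ a
      = Complex.exp (2 * Real.pi * Complex.I / p) ^ b := by
  set z := Complex.exp (2 * Real.pi * Complex.I / p)
  have key : ∀ n : ℕ, z ^ n = z ^ (n % p) := by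
    intro n
    conv_lhs => rw [← Nat.mod_add_div n p, pow_add, pow_mul, zeta_pow, one_pow, mul_one]
  rw [key a, key b, h]

lemma ep_add (p : ℕ) [NeZero p] (x y : ZMod p) : ep p x * ep p y = ep p (x + y) := by
  rw [ep_eq_pow, ep_eq_pow, ep_eq_pow, ← pow_add]
  exact zeta_pow_congr p (by rw [ZMod.val_add]; exact (Nat.mod_mod_of_dvd _ dvd_rfl).symm)

lemma ep_zero (p : ℕ) [NeZero p] : ep p 0 = 1 := by
  simp [ep]

lemma ep_abs (p : ℕ) [NeZero p] (x : ZMod p) : ‖ep p x‖ = 1 := by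
  have : (2 * Real.pi * Complex.I * (x.val : ℂ) / (p : ℂ))
      = ((2 * Real.pi * x.val / p : ℝ) : ℂ) * Complex.I := by
    push_cast; ring
  rw [ep, this, Complex.norm_exp_ofReal_mul_I]

lemma ep_conj (p : ℕ) [NeZero p] (x : ZMod p) :
    (starRingEnd ℂ) (ep p x) = ep p (-x) := by
  have h1 : ep p x * ep p (-x) = 1 := by rw [ep_add]; simp [ep_zero]
  have h2 : (starRingEnd ℂ) (ep p x) * ep p x = 1 := by
    rw [mul_comm, Complex.mul_conj, Complex.normSq_eq_norm_sq, ep_abs]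
    norm_num
  calc (starRingEnd ℂ) (ep p x) = (starRingEnd ℂ) (ep p x) * (ep p x * ep p (-x)) := by
        rw [h1, mul_one]
    _ = ((starRingEnd ℂ) (ep p x) * ep p x) * ep p (-x) := by ring
    _ = ep p (-x) := by rw [h2, one_mul]

lemma ep_sum (p : ℕ) [NeZero p] (hp : 2 ≤ p) : ∑ a : ZMod p, ep p a = 0 := by
  have hone : ep p 1 ≠ 1 := by
    rw [ep]
    have hval : ((1 : ZMod p)).val = 1 := ZMod.val_one_eq_one_mod p ▸ Nat.mod_eq_of_lt hp
    rw [hval]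
    intro h
    rw [Complex.exp_eq_one_iff] at h
    obtain ⟨n, hn⟩ := h
    have hπ : (Real.pi : ℂ) ≠ 0 := by exact_mod_cast Real.pi_ne_zero
    have hπ2 : (2 * Real.pi * Complex.I : ℂ) ≠ 0 := by
      simp [hπ, Complex.I_ne_zero]
    have hpc : (p : ℂ) ≠ 0 := Nat.cast_ne_zero.2 (NeZero.ne p)
    field_simp at hn
    have h3 : (2 * Real.pi * Complex.I) * 1 = (2 * Real.pi * Complex.I) * (n * p) := by
      have hn' : (1 : ℂ) = p * n := by exact_mod_cast hn
      linear_combination (2 * Real.pi * Complex.I) * hn'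
    have h4 : (1 : ℂ) = (n : ℂ) * p := mul_left_cancel₀ hπ2 h3
    have h5 : (1 : ℤ) = n * p := by exact_mod_cast h4
    have h6 : (p : ℤ) ∣ 1 := ⟨n, by linarith⟩
    have h7 : (p : ℤ) ≤ 1 := Int.le_of_dvd one_pos h6
    have : p ≤ 1 := by exact_mod_cast h7
    omega
  have hshift : ∑ a : ZMod p, ep p (1 + a) = ∑ a : ZMod p, ep p a :=
    Equiv.sum_comp (Equiv.addLeft (1 : ZMod p)) (ep p)
  have h0 : (ep p 1 - 1) * ∑ a : ZMod p, ep p a = 0 := by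
    rw [sub_mul, one_mul, Finset.mul_sum]
    simp_rw [ep_add]
    rw [hshift, sub_self]
  rcases mul_eq_zero.1 h0 with h | h
  · exact absurd (sub_eq_zero.1 h) hone
  · exact h

theorem stmt0 (p N d : ℕ) (hp : p.Prime) [NeZero p] (hN : 1 ≤ N)
    (C : Submodule (ZMod p) (Fin N → ZMod p))
    (hone : (fun _ => (1 : ZMod p)) ∈ C)
    (hdist : ∀ c ∈ C, ∀ c' ∈ C, c ≠ c' → d ≤ hammingDist c c')
    (S : Finset (Fin N → ZMod p)) (hSC : ↑S ⊆ (C : Set (Fin N → ZMod p)))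
    (hcard : 2 ≤ S.card)
    (hcoset : ∀ c ∈ S, ∀ c' ∈ S, c ≠ c' →
      ∀ t : ZMod p, c - c' ≠ t • (fun _ => (1 : ZMod p)))
    (v : (Fin N → ZMod p) → EuclideanSpace ℂ (Fin N))
    (hv : ∀ c, v c = fun α => ((1 / Real.sqrt N : ℝ) : ℂ) * ep p (c α)) :
    (∀ c ∈ S, ‖v c‖ = 1) ∧
    ∀ c ∈ S, ∀ c' ∈ S, c ≠ c' →
      ‖⟪v c, v c'⟫‖ ≤ ((p : ℝ) * ((p : ℝ) - 1) * N - (p : ℝ) ^ 2 * d) / (2 * N) := by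
  have hp2 : 2 ≤ p := hp.two_le
  have hNpos : (0 : ℝ) < N := by exact_mod_cast hN
  constructor
  · intro c _
    rw [EuclideanSpace.norm_eq]
    have hterm : ∀ α : Fin N, ‖v c α‖ ^ 2 = 1 / N := by
      intro α
      rw [hv]
      rw [norm_mul, Complex.norm_real, ep_abs, mul_one,
        Real.norm_eq_abs, abs_of_nonneg (by positivity), div_pow, one_pow,
        Real.sq_sqrt hNpos.le]
    rw [Finset.sum_congr rfl (fun α _ => hterm α), Finset.sum_const, Finset.card_univ,
      Fintype.card_fin, nsmul_eq_mul, mul_one_div, div_self hNpos.ne', Real.sqrt_one]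
  · intro c hc c' hc' hne
    set w : Fin N → ZMod p := c' - c with hw
    -- fiber counts
    have hfib : ∀ a : ZMod p, (Finset.univ.filter fun α => w α = a).card + d ≤ N := by
      intro a
      set c2 : Fin N → ZMod p := c + a • (fun _ => (1 : ZMod p)) with hc2def
      have hc2C : c2 ∈ C := C.add_mem (hSC hc) (C.smul_mem a hone)
      have hc'C : c' ∈ C := hSC hc'
      have hne2 : c2 ≠ c' := by
        intro h
        apply hcoset c hc c' hc' hne (-a)
        rw [← h, hc2def]
        funext α
        simp only [Pi.sub_apply, Pi.add_apply, Pi.smul_apply, smul_eq_mul, mul_one, Pi.neg_apply]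
        ring
      have hd : d ≤ hammingDist c2 c' := hdist c2 hc2C c' hc'C hne2
      have hiff : ∀ α, (c2 α = c' α) ↔ (w α = a) := by
        intro α
        simp only [hc2def, Pi.add_apply, Pi.smul_apply, smul_eq_mul, mul_one, hw, Pi.sub_apply]
        rw [sub_eq_iff_eq_add', eq_comm]
      have hsplit : (Finset.univ.filter fun α => c2 α = c' α).card
          + (Finset.univ.filter fun α => ¬ (c2 α = c' α)).card = N := by
        rw [Finset.card_filter_add_card_filter_not, Finset.card_univ, Fintype.card_fin]
      have hham : hammingDist c2 c' = (Finset.univ.filter fun α => ¬ (c2 α = c' α)).card := rfl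
      have hcongr : (Finset.univ.filter fun α => w α = a).card
          = (Finset.univ.filter fun α => c2 α = c' α).card := by
        congr 1
        exact Finset.filter_congr fun α _ => (hiff α).symm
      omega
    have hsum : ∑ a : ZMod p, (Finset.univ.filter fun α => w α = a).card = N := by
      rw [← Finset.card_eq_sum_card_fiberwise (f := w) (t := Finset.univ)
        (fun x _ => Finset.mem_univ _), Finset.card_univ, Fintype.card_fin]
    -- inner product formula
    have hcoef : (((1 / Real.sqrt N : ℝ) : ℂ) * ((1 / Real.sqrt N : ℝ) : ℂ)) = ((N : ℂ))⁻¹ := by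
      rw [← Complex.ofReal_mul, div_mul_div_comm, one_mul, Real.mul_self_sqrt hNpos.le]
      push_cast
      rw [one_div]
    have hinner : ⟪v c, v c'⟫ = ((N : ℂ))⁻¹ * ∑ α, ep p (w α) := by
      rw [PiLp.inner_apply, hv, hv]
      rw [Finset.mul_sum]
      refine Finset.sum_congr rfl fun α _ => ?_
      simp only [RCLike.inner_apply]
      rw [map_mul, Complex.conj_ofReal, ep_conj]
      have h1 : ep p (-(c α)) * ep p (c' α) = ep p (w α) := by
        rw [ep_add]
        congr 1
        simp [hw, sub_eq_add_neg, add_comm]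
      calc (((1 / Real.sqrt N : ℝ) : ℂ)) * ep p (c' α)
            * ((((1 / Real.sqrt N : ℝ) : ℂ)) * ep p (-(c α)))
          = ((((1 / Real.sqrt N : ℝ) : ℂ)) * (((1 / Real.sqrt N : ℝ) : ℂ)))
            * (ep p (-(c α)) * ep p (c' α)) := by ring
        _ = ((N : ℂ))⁻¹ * ep p (w α) := by rw [hcoef, h1]
    -- rewrite the big sum via fibers
    have hSigma : ∑ α, ep p (w α)
        = ∑ a : ZMod p, (((Finset.univ.filter fun α => w α = a).card : ℂ)
            - ((N : ℝ) - d)) * ep p a := by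
      rw [← Finset.sum_fiberwise' Finset.univ w (ep p)]
      have h0 : ∑ a : ZMod p, (((N : ℝ) - d : ℝ) : ℂ) * ep p a = 0 := by
        rw [← Finset.mul_sum, ep_sum p hp2, mul_zero]
      calc ∑ a : ZMod p, ∑ α ∈ Finset.univ.filter fun α => w α = a, ep p a
          = ∑ a : ZMod p, ((Finset.univ.filter fun α => w α = a).card : ℂ) * ep p a := by
            refine Finset.sum_congr rfl fun a _ => ?_
            rw [Finset.sum_const, nsmul_eq_mul]
        _ = ∑ a : ZMod p, (((Finset.univ.filter fun α => w α = a).card : ℂ)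
              - ((N : ℝ) - d)) * ep p a := by
            rw [← sub_eq_zero]
            rw [← Finset.sum_sub_distrib]
            simp_rw [← sub_mul]
            have : ∀ a : ZMod p, (((Finset.univ.filter fun α => w α = a).card : ℂ)
                - (((Finset.univ.filter fun α => w α = a).card : ℂ) - ((N : ℝ) - d)))
                = (((N : ℝ) - d : ℝ) : ℂ) := by intro a; push_cast; ring
            simp_rw [this]
            exact h0
    -- bound the norm of the sum
    have hbound : ‖∑ α, ep p (w α)‖ ≤ (p : ℝ) * ((N : ℝ) - d) - N := by
      rw [hSigma]
      calc ‖∑ a : ZMod p, (((Finset.univ.filter fun α => w α = a).card : ℂ)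
              - ((N : ℝ) - d)) * ep p a‖
          ≤ ∑ a : ZMod p, ‖(((Finset.univ.filter fun α => w α = a).card : ℂ)
              - ((N : ℝ) - d)) * ep p a‖ := norm_sum_le _ _
        _ = ∑ a : ZMod p, (((N : ℝ) - d) - (Finset.univ.filter fun α => w α = a).card) := by
            refine Finset.sum_congr rfl fun a _ => ?_
            rw [norm_mul, ep_abs, mul_one]
            have hcast : (((Finset.univ.filter fun α => w α = a).card : ℂ) - ((N : ℝ) - d))
                = ((((Finset.univ.filter fun α => w α = a).card : ℝ) - ((N : ℝ) - d) : ℝ) : ℂ) := by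
              push_cast; ring
            rw [hcast, Complex.norm_real, Real.norm_eq_abs, abs_of_nonpos, neg_sub]
            have := hfib a
            have : ((Finset.univ.filter fun α => w α = a).card : ℝ) + d ≤ N := by
              exact_mod_cast this
            linarith
        _ = (p : ℝ) * ((N : ℝ) - d) - N := by
            rw [Finset.sum_sub_distrib, Finset.sum_const, Finset.card_univ, ZMod.card,
              nsmul_eq_mul]
            have : ∑ a : ZMod p, ((Finset.univ.filter fun α => w α = a).card : ℝ) = N := by
              exact_mod_cast congrArg (Nat.cast : ℕ → ℝ) hsum
            rw [this]
    -- finish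
    have habs0 : 0 ≤ ‖∑ α, ep p (w α)‖ := norm_nonneg _
    rw [hinner, norm_mul, norm_inv, Complex.norm_natCast,
      inv_mul_eq_div, div_le_div_iff₀ hNpos (by positivity)]
    have hpR : (2 : ℝ) ≤ p := by exact_mod_cast hp2
    have hB0 : (0 : ℝ) ≤ (p : ℝ) * ((N : ℝ) - d) - N := le_trans habs0 hbound
    nlinarith [mul_le_mul_of_nonneg_right hbound (le_of_lt hNpos),
      mul_nonneg (mul_nonneg (sub_nonneg.2 hpR) hB0) hNpos.le]
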